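/- Let γ_n := sup over all n×n real positive definite matrices A of λ₁(A)ⁿ / det(A), where λ₁(A) := min_{x ∈ ℤⁿ \ {0}} xᵀ A x (the Hermite constant). If X ∈ S^n_+(ℤ) is sporadic, then det(X) < γ_n. -/

import Mathlib

open Matrix MeasureTheory

variable {n : ℕ}

lemma castVec_ne_zero {x : Fin n → ℤ} (hx : x ≠ 0) : (fun i => (x i : ℝ)) ≠ 0 := by
  intro h
  apply hx
  funext i
  have := congrFun h i
  simpa using this

lemma quad_cast (M : Matrix (Fin n) (Fin n) ℤ) (x : Fin n → ℤ) :
    ((x ⬝ᵥ M *ᵥ x : ℤ) : ℝ) =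
      (fun i => (x i : ℝ)) ⬝ᵥ (M.map (Int.cast : ℤ → ℝ)) *ᵥ (fun i => (x i : ℝ)) := by
  simp only [dotProduct, mulVec, Matrix.map_apply]
  push_cast
  rfl

open scoped MatrixOrder Matrix.Norms.L2Operator in
lemma psd_sqrt_exists {A : Matrix (Fin n) (Fin n) ℝ} (hA : A.PosSemidef) :
    ∃ S : Matrix (Fin n) (Fin n) ℝ, S.PosSemidef ∧ S * S = A :=
  ⟨CFC.sqrt A, (CFC.sqrt_nonneg A).posSemidef, CFC.sqrt_mul_sqrt_self A hA.nonneg⟩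

open scoped MatrixOrder Matrix.Norms.L2Operator in
lemma psd_eq_ct_mul_self {A : Matrix (Fin n) (Fin n) ℝ} (hA : A.PosSemidef) :
    ∃ B : Matrix (Fin n) (Fin n) ℝ, A = Bᴴ * B := by
  obtain ⟨B, hB⟩ := CStarAlgebra.nonneg_iff_eq_star_mul_self.mp hA.nonneg
  exact ⟨B, hB⟩

lemma psd_det_nonneg {A : Matrix (Fin n) (Fin n) ℝ} (hA : A.PosSemidef) : 0 ≤ A.det := by
  obtain ⟨B, rfl⟩ := psd_eq_ct_mul_self hA
  rw [Matrix.det_mul, Matrix.det_conjTranspose]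
  simpa using mul_self_nonneg (B.det)

lemma posdef_of_psd_det_ne {A : Matrix (Fin n) (Fin n) ℝ} (hA : A.PosSemidef)
    (hd : A.det ≠ 0) : A.PosDef := by
  refine ⟨hA.1, fun x hx => ?_⟩
  rcases lt_or_eq_of_le (hA.2 x) with h | h
  · exact h
  · exfalso
    have h0 : A *ᵥ x = 0 := (hA.dotProduct_mulVec_zero_iff x).mp (by
      simpa [dotProduct, mulVec, Finsupp.sum_fintype, Finset.mul_sum, mul_assoc] using h.symm)
    have hinj : Function.Injective (A.mulVec) :=
      Matrix.mulVec_injective_iff_isUnit.mpr ((Matrix.isUnit_iff_isUnit_det A).mpr hd.isUnit)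
    exact hx (Finsupp.ext fun i => congrFun (hinj (show A *ᵥ ⇑x = A *ᵥ 0 by simpa using h0)) i)

lemma dot_mulVec_symm {S : Matrix (Fin n) (Fin n) ℝ} (hS : S.IsHermitian)
    (u w : Fin n → ℝ) : u ⬝ᵥ S *ᵥ w = (S *ᵥ u) ⬝ᵥ w := by
  rw [Matrix.dotProduct_mulVec, ← Matrix.mulVec_transpose]
  congr 1
  rw [← Matrix.conjTranspose_eq_transpose_of_trivial, hS.eq]

lemma minkowski_bound (hn : 1 ≤ n) {A : Matrix (Fin n) (Fin n) ℝ} (hA : A.PosDef) :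
    ∃ x : Fin n → ℤ, x ≠ 0 ∧
      (fun i => (x i : ℝ)) ⬝ᵥ A *ᵥ (fun i => (x i : ℝ)) ≤ (4 * n) * A.det ^ ((1:ℝ)/n) := by
  classical
  have hApsd := hA.posSemidef
  obtain ⟨S, hS, hSS⟩ := psd_sqrt_exists hApsd
  set d := S.det with hd
  have hd2 : d * d = A.det := by rw [hd, ← Matrix.det_mul, hSS]
  have hdnn : 0 ≤ d := by
    obtain ⟨B, hB⟩ := psd_eq_ct_mul_self hS
    rw [hd, hB, Matrix.det_mul, Matrix.det_conjTranspose]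
    simpa using mul_self_nonneg (B.det)
  have hdetA : 0 < A.det := hA.det_pos
  have hdpos : 0 < d := lt_of_le_of_ne hdnn (fun h => by rw [← h, mul_zero] at hd2; linarith)
  set t : ℝ := 2 * d ^ ((1:ℝ)/n) with htdef
  have hdr : 0 < d ^ ((1:ℝ)/n) := Real.rpow_pos_of_pos hdpos _
  have ht : 0 < t := by positivity
  set f : (Fin n → ℝ) →ₗ[ℝ] (Fin n → ℝ) := Matrix.toLin' S with hf
  have hfdet : LinearMap.det f = d := LinearMap.det_toLin' S
  set cube : Set (Fin n → ℝ) := Set.pi Set.univ (fun _ : Fin n => Set.Icc (-t) t) with hcube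
  set s : Set (Fin n → ℝ) := f ⁻¹' cube with hs
  have hconv : Convex ℝ s := (convex_pi (fun i _ => convex_Icc (-t) t)).linear_preimage f
  have hsymm : ∀ y ∈ s, -y ∈ s := by
    intro y hy
    simp only [hs, Set.mem_preimage, hcube, Set.mem_pi, Set.mem_univ, forall_true_left,
      Set.mem_Icc, map_neg] at hy ⊢
    intro i
    have := hy i
    constructor <;> simp only [Pi.neg_apply] <;> linarith [this.1, this.2]
  have hvolcube : volume cube = (ENNReal.ofReal (2*t)) ^ n := by
    rw [hcube, volume_pi_pi]
    simp only [Real.volume_Icc, sub_neg_eq_add, Finset.prod_const, Finset.card_univ,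
      Fintype.card_fin]
    congr 2
    ring
  have hvols : volume s = ENNReal.ofReal (d⁻¹) * (ENNReal.ofReal (2*t)) ^ n := by
    rw [hs, MeasureTheory.Measure.addHaar_preimage_linearMap volume (by rw [hfdet]; exact hdpos.ne') cube,
      hvolcube, hfdet, abs_of_nonneg (by positivity)]
  set b : Module.Basis (Fin n) ℝ (Fin n → ℝ) := Pi.basisFun ℝ (Fin n) with hb
  have fund := ZSpan.isAddFundamentalDomain' b volume
  have hvolF : volume (ZSpan.fundamentalDomain b) = 1 := by
    rw [ZSpan.volume_fundamentalDomain]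
    have : (Matrix.of ⇑b) = (1 : Matrix (Fin n) (Fin n) ℝ) := by
      ext i j
      simp [hb, Matrix.one_apply, Pi.single_apply, eq_comm]
    rw [this, Matrix.det_one]
    simp
  have hnR : (0:ℝ) < (n:ℝ) := by exact_mod_cast hn
  have hpow : (d ^ ((1:ℝ)/n)) ^ n = d := by
    rw [one_div]
    exact Real.rpow_inv_natCast_pow hdnn (by omega)
  have h2t : (2*t)^n = 4^n * d := by
    have : 2 * t = 4 * d ^ ((1:ℝ)/n) := by rw [htdef]; ring
    rw [this, mul_pow, hpow]
  have hlt : volume (ZSpan.fundamentalDomain b) * 2 ^ Module.finrank ℝ (Fin n → ℝ)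
      < volume s := by
    rw [hvolF, hvols, one_mul, Module.finrank_fin_fun, ← ENNReal.ofReal_pow (by positivity),
      ← ENNReal.ofReal_mul (by positivity), h2t]
    have h2 : ((2:ENNReal)) ^ n = ENNReal.ofReal (2^n) := by
      rw [ENNReal.ofReal_pow (by norm_num)]
      norm_num
    rw [h2]
    rw [ENNReal.ofReal_lt_ofReal_iff (by positivity)]
    have h4 : d⁻¹ * (4^n*d) = 4^n := by field_simp
    rw [h4]
    exact pow_lt_pow_left₀ (by norm_num) (by norm_num) (by omega)
  have : Countable (Submodule.span ℤ (Set.range ⇑b)).toAddSubgroup := by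
    change Countable (Submodule.span ℤ (Set.range ⇑b))
    infer_instance
  obtain ⟨v, hv0, hvs⟩ :=
    MeasureTheory.exists_ne_zero_mem_lattice_of_measure_mul_two_pow_lt_measure fund hsymm hconv hlt
  have hcoord : ∀ i, ∃ z : ℤ, (z:ℝ) = (↑v : Fin n → ℝ) i := by
    intro i
    obtain ⟨z, hz⟩ := (b.mem_span_iff_repr_mem ℤ (↑v : Fin n → ℝ)).mp v.2 i
    exact ⟨z, by simpa [hb] using hz⟩
  choose x hx using hcoord
  have hxR : (fun i => (x i : ℝ)) = (↑v : Fin n → ℝ) := funext hx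
  refine ⟨x, ?_, ?_⟩
  · intro h
    apply hv0
    have : (↑v : Fin n → ℝ) = 0 := by
      funext i
      rw [← hx i, h]
      simp
    exact Subtype.ext this
  · set w : Fin n → ℝ := S *ᵥ (fun i => (x i : ℝ)) with hw
    have hquad : (fun i => (x i : ℝ)) ⬝ᵥ A *ᵥ (fun i => (x i : ℝ)) = w ⬝ᵥ w := by
      rw [← hSS, ← Matrix.mulVec_mulVec, dot_mulVec_symm hS.1]
    have hwf : w = f (↑v : Fin n → ℝ) := by
      rw [hw, hxR, hf, Matrix.toLin'_apply]
    have hwb : ∀ i, w i * w i ≤ t * t := by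
      intro i
      have hi : w i ∈ Set.Icc (-t) t := by
        rw [hwf]
        exact hvs i (Set.mem_univ i)
      have habs : |w i| ≤ t := abs_le.mpr ⟨hi.1, hi.2⟩
      calc w i * w i = |w i| * |w i| := (abs_mul_abs_self _).symm
        _ ≤ t * t := mul_le_mul habs habs (abs_nonneg _) ht.le
    have hsum : w ⬝ᵥ w ≤ n * (t * t) := by
      rw [dotProduct]
      calc ∑ i, w i * w i ≤ ∑ _i : Fin n, t * t := Finset.sum_le_sum (fun i _ => hwb i)
        _ = n * (t * t) := by rw [Finset.sum_const, Finset.card_univ, Fintype.card_fin,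
              nsmul_eq_mul]
    have hfinal : (n : ℝ) * (t * t) = 4 * n * A.det ^ ((1:ℝ)/n) := by
      have hAd : A.det ^ ((1:ℝ)/n) = d ^ ((1:ℝ)/n) * d ^ ((1:ℝ)/n) := by
        rw [← hd2, Real.mul_rpow hdnn hdnn]
      rw [hAd, htdef]
      ring
    rw [hquad]
    calc w ⬝ᵥ w ≤ n * (t*t) := hsum
      _ = 4 * n * A.det ^ ((1:ℝ)/n) := hfinal
lemma dot_vecMulVec (x v : Fin n → ℝ) :
    v ⬝ᵥ (vecMulVec x x) *ᵥ v = (x ⬝ᵥ v) * (x ⬝ᵥ v) := by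
  simp only [dotProduct, vecMulVec_apply, mulVec, Finset.mul_sum, Finset.sum_mul]
  rw [Finset.sum_comm]
  refine Finset.sum_congr rfl fun i _ => Finset.sum_congr rfl fun j _ => by ring

lemma key_cs {X : Matrix (Fin n) (Fin n) ℝ} (hX : X.PosDef) (x v : Fin n → ℝ)
    (h : x ⬝ᵥ X⁻¹ *ᵥ x ≤ 1) : (x ⬝ᵥ v) * (x ⬝ᵥ v) ≤ v ⬝ᵥ X *ᵥ v := by
  have hdet : IsUnit X.det := (isUnit_iff_ne_zero).mpr hX.det_pos.ne'
  set w : Fin n → ℝ := X⁻¹ *ᵥ x with hw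
  have hXw : X *ᵥ w = x := by
    rw [hw, Matrix.mulVec_mulVec, Matrix.mul_nonsing_inv _ hdet, Matrix.one_mulVec]
  set q : ℝ := x ⬝ᵥ X⁻¹ *ᵥ x with hq
  have hqw : w ⬝ᵥ X *ᵥ w = q := by
    rw [hXw, hq, hw, dotProduct_comm]
  have hq0 : 0 ≤ q := by
    rw [← hqw]
    simpa using hX.posSemidef.dotProduct_mulVec_nonneg w
  have hb : w ⬝ᵥ X *ᵥ v = x ⬝ᵥ v := by
    rw [dot_mulVec_symm hX.1, hXw]
  have hb' : v ⬝ᵥ X *ᵥ w = x ⬝ᵥ v := by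
    rw [hXw, dotProduct_comm]
  have hvXv : 0 ≤ v ⬝ᵥ X *ᵥ v := by simpa using hX.posSemidef.dotProduct_mulVec_nonneg v
  rcases eq_or_lt_of_le hq0 with hq0' | hqpos
  · have hwz : X *ᵥ w = 0 := by
      refine (hX.posSemidef.dotProduct_mulVec_zero_iff w).mp ?_
      simpa using hqw.trans hq0'.symm
    have hx0 : x = 0 := by rw [← hXw, hwz]
    rw [hx0]
    simpa using hvXv
  · set c : ℝ := (x ⬝ᵥ v) / q with hc
    have hexp : 0 ≤ (v - c • w) ⬝ᵥ X *ᵥ (v - c • w) := by simpa using hX.posSemidef.dotProduct_mulVec_nonneg (v - c • w)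
    have hexp2 : (v - c • w) ⬝ᵥ X *ᵥ (v - c • w)
        = v ⬝ᵥ X *ᵥ v - 2 * c * (x ⬝ᵥ v) + c * c * q := by
      rw [Matrix.mulVec_sub, Matrix.mulVec_smul, sub_dotProduct, dotProduct_sub,
        dotProduct_sub, dotProduct_smul, smul_dotProduct,
        smul_dotProduct, dotProduct_smul, hb, hb', hqw]
      simp only [smul_eq_mul]
      ring
    rw [hexp2] at hexp
    have hkey : (x ⬝ᵥ v) * (x ⬝ᵥ v) / q ≤ v ⬝ᵥ X *ᵥ v := by
      have : 2 * c * (x ⬝ᵥ v) - c * c * q = (x ⬝ᵥ v) * (x ⬝ᵥ v) / q := by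
        rw [hc]; field_simp; ring
      linarith [hexp, this]
    calc (x ⬝ᵥ v) * (x ⬝ᵥ v) ≤ (x ⬝ᵥ v) * (x ⬝ᵥ v) / q := by
          rw [le_div_iff₀ hqpos]
          nlinarith [mul_self_nonneg (x ⬝ᵥ v)]
      _ ≤ v ⬝ᵥ X *ᵥ v := hkey

lemma sub_vecMulVec_posSemidef {X : Matrix (Fin n) (Fin n) ℝ} (hX : X.PosDef) (x : Fin n → ℝ)
    (h : x ⬝ᵥ X⁻¹ *ᵥ x ≤ 1) : (X - vecMulVec x x).PosSemidef := by
  refine Matrix.PosSemidef.of_dotProduct_mulVec_nonneg ?_ ?_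
  · refine hX.1.sub ?_
    show (vecMulVec x x)ᴴ = vecMulVec x x
    ext i j
    simp [vecMulVec_apply, mul_comm]
  · intro v
    have hsv : star v = v := by
      funext i; simp
    rw [hsv, Matrix.sub_mulVec, dotProduct_sub, dot_vecMulVec]
    have := key_cs hX x v h
    linarith
/-- `λ₁(A) = min_{x ∈ ℤⁿ \ {0}} xᵀ A x`. -/
noncomputable def lambdaOne {n : ℕ} (A : Matrix (Fin n) (Fin n) ℝ) : ℝ :=
  sInf {v : ℝ | ∃ x : Fin n → ℤ, x ≠ 0 ∧
    v = (fun i => (x i : ℝ)) ⬝ᵥ A.mulVec (fun i => (x i : ℝ))}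

/-- The Hermite constant `γ_n = sup_{A ≻ 0} λ₁(A)ⁿ / det A`. -/
noncomputable def hermiteConstant (n : ℕ) : ℝ :=
  sSup {t : ℝ | ∃ A : Matrix (Fin n) (Fin n) ℝ, A.PosDef ∧ t = lambdaOne A ^ n / A.det}

lemma lamSet_nonempty (hn : 1 ≤ n) (A : Matrix (Fin n) (Fin n) ℝ) :
    {v : ℝ | ∃ x : Fin n → ℤ, x ≠ 0 ∧
      v = (fun i => (x i : ℝ)) ⬝ᵥ A.mulVec (fun i => (x i : ℝ))}.Nonempty := by
  refine ⟨_, Pi.single ⟨0, hn⟩ 1, ?_, rfl⟩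
  intro h
  have := congrFun h ⟨0, hn⟩
  simp at this

lemma lamSet_bddBelow {A : Matrix (Fin n) (Fin n) ℝ} (hA : A.PosSemidef) :
    BddBelow {v : ℝ | ∃ x : Fin n → ℤ, x ≠ 0 ∧
      v = (fun i => (x i : ℝ)) ⬝ᵥ A.mulVec (fun i => (x i : ℝ))} := by
  refine ⟨0, ?_⟩
  rintro v ⟨x, hx, rfl⟩
  simpa using hA.dotProduct_mulVec_nonneg (fun i => (x i : ℝ))

lemma lambdaOne_nonneg (hn : 1 ≤ n) {A : Matrix (Fin n) (Fin n) ℝ} (hA : A.PosSemidef) :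
    0 ≤ lambdaOne A := by
  refine le_csInf (lamSet_nonempty hn A) ?_
  rintro v ⟨x, hx, rfl⟩
  simpa using hA.dotProduct_mulVec_nonneg (fun i => (x i : ℝ))

lemma lambdaOne_le {A : Matrix (Fin n) (Fin n) ℝ} (hA : A.PosSemidef)
    {x : Fin n → ℤ} (hx : x ≠ 0) :
    lambdaOne A ≤ (fun i => (x i : ℝ)) ⬝ᵥ A.mulVec (fun i => (x i : ℝ)) :=
  csInf_le (lamSet_bddBelow hA) ⟨x, hx, rfl⟩

lemma hermiteSet_bddAbove (hn : 1 ≤ n) :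
    BddAbove {t : ℝ | ∃ A : Matrix (Fin n) (Fin n) ℝ, A.PosDef ∧ t = lambdaOne A ^ n / A.det} := by
  refine ⟨(4 * n) ^ n, ?_⟩
  rintro t ⟨A, hA, rfl⟩
  obtain ⟨x, hx, hxle⟩ := minkowski_bound hn hA
  have h1 : lambdaOne A ≤ 4 * n * A.det ^ ((1:ℝ)/n) := le_trans (lambdaOne_le hA.posSemidef hx) hxle
  have h0 : 0 ≤ lambdaOne A := lambdaOne_nonneg hn hA.posSemidef
  have hdet : 0 < A.det := hA.det_pos
  have hpow : (A.det ^ ((1:ℝ)/n)) ^ n = A.det := by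
    rw [one_div]
    exact Real.rpow_inv_natCast_pow hdet.le (by omega)
  have h2 : lambdaOne A ^ n ≤ (4 * n) ^ n * A.det := by
    calc lambdaOne A ^ n ≤ (4 * n * A.det ^ ((1:ℝ)/n)) ^ n := pow_le_pow_left₀ h0 h1 n
      _ = (4 * n) ^ n * (A.det ^ ((1:ℝ)/n)) ^ n := mul_pow _ _ n
      _ = (4 * n) ^ n * A.det := by rw [hpow]
  rw [div_le_iff₀ hdet]
  exact h2

lemma lambdaOne_one (hn : 1 ≤ n) : lambdaOne (1 : Matrix (Fin n) (Fin n) ℝ) = 1 := by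
  refine le_antisymm ?_ ?_
  · have hmem : (1:ℝ) ∈ {v : ℝ | ∃ x : Fin n → ℤ, x ≠ 0 ∧
        v = (fun i => (x i : ℝ)) ⬝ᵥ (1 : Matrix (Fin n) (Fin n) ℝ).mulVec (fun i => (x i : ℝ))} := by
      refine ⟨Pi.single ⟨0, hn⟩ 1, ?_, ?_⟩
      · intro h
        have := congrFun h ⟨0, hn⟩
        simp at this
      · rw [Matrix.one_mulVec]
        simp [dotProduct, Pi.single_apply]
    exact csInf_le (lamSet_bddBelow Matrix.PosDef.one.posSemidef) hmem
  · refine le_csInf (lamSet_nonempty hn 1) ?_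
    rintro v ⟨x, hx, rfl⟩
    obtain ⟨j, hj⟩ := Function.ne_iff.mp hx
    rw [Matrix.one_mulVec]
    have hterm : (1:ℝ) ≤ (x j : ℝ) * (x j : ℝ) := by
      have h1 : 1 ≤ x j * x j := by
        rcases lt_or_gt_of_ne (show x j ≠ 0 by simpa using hj) with h | h <;> nlinarith
      exact_mod_cast h1
    calc (1:ℝ) ≤ (x j : ℝ) * (x j : ℝ) := hterm
      _ ≤ ∑ i, (x i : ℝ) * (x i : ℝ) :=
          Finset.single_le_sum (f := fun i => (x i : ℝ) * (x i : ℝ)) (fun i _ => mul_self_nonneg _) (Finset.mem_univ j)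
      _ = _ := rfl

lemma one_le_hermiteConstant (hn : 1 ≤ n) : 1 ≤ hermiteConstant n := by
  have hmem : (1:ℝ) ∈ {t : ℝ | ∃ A : Matrix (Fin n) (Fin n) ℝ,
      A.PosDef ∧ t = lambdaOne A ^ n / A.det} := by
    refine ⟨1, Matrix.PosDef.one, ?_⟩
    rw [lambdaOne_one hn, one_pow, Matrix.det_one, div_one]
  exact le_csSup (hermiteSet_bddAbove hn) hmem
/-- A sporadic matrix `X ∈ S^n_+(ℤ)` satisfies `det X < γ_n`. -/
theorem det_lt_hermiteConstant_of_sporadic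
    (n : ℕ) (hn : 1 ≤ n) (X : Matrix (Fin n) (Fin n) ℤ)
    (hX : (X.map (Int.cast : ℤ → ℝ)).PosSemidef)
    (hsporadic : ¬ ∃ x : Fin n → ℤ, x ≠ 0 ∧
      ((X - Matrix.vecMulVec x x).map (Int.cast : ℤ → ℝ)).PosSemidef) :
    (X.det : ℝ) < hermiteConstant n := by
  set Xr : Matrix (Fin n) (Fin n) ℝ := X.map (Int.cast : ℤ → ℝ) with hXr
  have hdetcast : (X.det : ℝ) = Xr.det := by
    rw [hXr]
    exact RingHom.map_det (Int.castRingHom ℝ) X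
  have hdet0 : 0 ≤ (X.det : ℝ) := by
    rw [hdetcast]
    exact psd_det_nonneg hX
  rcases eq_or_lt_of_le hdet0 with hdz | hdpos
  · -- det X = 0
    calc (X.det : ℝ) = 0 := hdz.symm
      _ < 1 := one_pos
      _ ≤ hermiteConstant n := one_le_hermiteConstant hn
  · -- det X > 0
    have hXpd : Xr.PosDef := posdef_of_psd_det_ne hX (by rw [← hdetcast]; exact hdpos.ne')
    set A : Matrix (Fin n) (Fin n) ℝ := Xr⁻¹ with hA
    have hApd : A.PosDef := hXpd.inv
    have hdZ : 0 < X.det := by exact_mod_cast hdpos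
    -- the quadratic form of A at integer vectors is k / det X
    have hquadA : ∀ x : Fin n → ℤ,
        (fun i => (x i : ℝ)) ⬝ᵥ A *ᵥ (fun i => (x i : ℝ))
          = ((x ⬝ᵥ X.adjugate *ᵥ x : ℤ) : ℝ) / (X.det : ℝ) := by
      intro x
      have hadj : Xr.adjugate = (X.adjugate).map (Int.cast : ℤ → ℝ) := by
        rw [hXr]
        exact ((Int.castRingHom ℝ).map_adjugate X).symm
      have hinv : A = ((X.det : ℝ))⁻¹ • (X.adjugate).map (Int.cast : ℤ → ℝ) := by
        rw [hA, Matrix.inv_def, Ring.inverse_eq_inv', hadj, hdetcast]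
      rw [hinv, Matrix.smul_mulVec, dotProduct_smul, quad_cast, smul_eq_mul,
        div_eq_inv_mul]
    -- every nonzero integer vector has A-value at least 1 + 1/det X
    have hclaim : ∀ x : Fin n → ℤ, x ≠ 0 →
        1 + 1 / (X.det : ℝ) ≤ (fun i => (x i : ℝ)) ⬝ᵥ A *ᵥ (fun i => (x i : ℝ)) := by
      intro x hx
      have hq1 : 1 < (fun i => (x i : ℝ)) ⬝ᵥ A *ᵥ (fun i => (x i : ℝ)) := by
        by_contra hle
        push_neg at hle
        apply hsporadic
        refine ⟨x, hx, ?_⟩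
        have hps : (Xr - vecMulVec (fun i => (x i : ℝ)) (fun i => (x i : ℝ))).PosSemidef :=
          sub_vecMulVec_posSemidef hXpd _ (by rw [← hA]; exact hle)
        have heq : (X - Matrix.vecMulVec x x).map (Int.cast : ℤ → ℝ)
            = Xr - vecMulVec (fun i => (x i : ℝ)) (fun i => (x i : ℝ)) := by
          ext i j
          simp [hXr, Matrix.map_apply, Matrix.vecMulVec_apply, Matrix.sub_apply]
        rw [heq]
        exact hps
      rw [hquadA x] at hq1 ⊢
      set k : ℤ := x ⬝ᵥ X.adjugate *ᵥ x with hk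
      have hklt : X.det < k := by
        by_contra hkle
        push_neg at hkle
        have : (k : ℝ) / (X.det : ℝ) ≤ 1 := by
          rw [div_le_one hdpos]
          exact_mod_cast hkle
        linarith
      have hk1 : X.det + 1 ≤ k := hklt
      have hk1R : (X.det : ℝ) + 1 ≤ (k : ℝ) := by exact_mod_cast hk1
      rw [le_div_iff₀ hdpos]
      have hne : (X.det : ℝ) ≠ 0 := hdpos.ne'
      have : (1 + 1 / (X.det : ℝ)) * (X.det : ℝ) = (X.det : ℝ) + 1 := by
        field_simp
      rw [this]
      exact hk1R
    have hlam : 1 + 1 / (X.det : ℝ) ≤ lambdaOne A := by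
      refine le_csInf (lamSet_nonempty hn A) ?_
      rintro v ⟨x, hx, rfl⟩
      exact hclaim x hx
    have hdetA : A.det = ((X.det : ℝ))⁻¹ := by
      rw [hA, Matrix.det_nonsing_inv, Ring.inverse_eq_inv', hdetcast]
    have hge : lambdaOne A ^ n / A.det ≤ hermiteConstant n :=
      le_csSup (hermiteSet_bddAbove hn) ⟨A, hApd, rfl⟩
    have hlam1 : 1 < lambdaOne A := by
      have : 1 < 1 + 1 / (X.det : ℝ) := by
        have : 0 < 1 / (X.det : ℝ) := by positivity
        linarith
      linarith
    have hpow : 1 < lambdaOne A ^ n := one_lt_pow₀ hlam1 (by omega)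
    have hdiv : lambdaOne A ^ n / A.det = lambdaOne A ^ n * (X.det : ℝ) := by
      rw [hdetA, div_inv_eq_mul]
    calc (X.det : ℝ) = 1 * (X.det : ℝ) := (one_mul _).symm
      _ < lambdaOne A ^ n * (X.det : ℝ) := by
          exact mul_lt_mul_of_pos_right hpow hdpos
      _ = lambdaOne A ^ n / A.det := hdiv.symm
      _ ≤ hermiteConstant n := hge
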